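/- Let (g_t)_{t=1}^{T} be a step function with a single change-point at η_1 ∈ (1,T) and jump size δ = |g_{η_1+1} − g_{η_1}| > 0. Then there exists an absolute constant C_3 > 0 such that for any ε_T > 0 and c_0 > 0 with c_0 ε_T ≤ η_1 ∧ (T − η_1), and any b′ ∈ [1,T) with |b′ − η_1| ≥ c_0 ε_T, one has |C_{η_1}((g_t)_{t=1}^T) − C_{b′}((g_t)_{t=1}^T)| ≥ C_3 c_0 ε_T · |C_{η_1}((g_t)_{t=1}^T)| · T/(η_1(T−η_1)). -/

import Mathlib

open Finset

/-- The CUSUM statistic of the sequence `a` over the interval `[s, e]`, evaluated at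
`b ∈ [s, e)`. -/
noncomputable def cusum (a : ℕ → ℝ) (s b e : ℕ) : ℝ :=
  Real.sqrt (((e : ℝ) - b) / (((e : ℝ) - s + 1) * ((b : ℝ) - s + 1))) *
      ∑ t ∈ Finset.Icc s b, a t -
    Real.sqrt (((b : ℝ) - s + 1) / (((e : ℝ) - s + 1) * ((e : ℝ) - b))) *
      ∑ t ∈ Finset.Icc (b + 1) e, a t

lemma sum_const_Ioc (g : ℕ → ℝ) (c : ℝ) (u v : ℕ) (h : ∀ t, u < t → t ≤ v → g t = c) :
    ∑ t ∈ Finset.Ioc u v, g t = ((v - u : ℕ) : ℝ) * c := by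
  rw [Finset.sum_congr rfl (fun t ht => h t (Finset.mem_Ioc.mp ht).1 (Finset.mem_Ioc.mp ht).2)]
  simp [Nat.card_Ioc]

lemma key_id (T b : ℝ) (hb : 0 < b) (hbT : b < T) :
    Real.sqrt ((T - b)/(T*b)) * b = Real.sqrt (b/(T*(T-b))) * (T - b) := by
  have hT : 0 < T := hb.trans hbT
  have hTb : 0 < T - b := by linarith
  have e1 : (T - b)/(T*b) * b^2 = b*(T-b)/T := by field_simp
  have e2 : b/(T*(T-b)) * (T-b)^2 = b*(T-b)/T := by field_simp
  have h1 := Real.sqrt_mul (div_nonneg hTb.le (by positivity : (0:ℝ) ≤ T*b)) (b^2)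
  rw [Real.sqrt_sq hb.le, e1] at h1
  have h2 := Real.sqrt_mul (div_nonneg hb.le (by positivity : (0:ℝ) ≤ T*(T-b))) ((T-b)^2)
  rw [Real.sqrt_sq hTb.le, e2] at h2
  rw [← h1, ← h2]

lemma cusum_left (T η b : ℕ) (a a' : ℝ) (g : ℕ → ℝ) (h1 : 1 ≤ b) (h2 : b ≤ η) (h3 : η < T)
    (ha : ∀ t, 1 ≤ t → t ≤ η → g t = a) (ha' : ∀ t, η < t → t ≤ T → g t = a') :
    cusum g 1 b T = Real.sqrt ((b:ℝ)/((T:ℝ)*((T:ℝ)-b))) * (((T:ℝ)-η)*(a-a')) := by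
  have hbT : b < T := lt_of_le_of_lt h2 h3
  unfold cusum
  have c1 : ((T:ℝ) - 1 + 1) = (T:ℝ) := by ring
  have c2 : ((b:ℝ) - 1 + 1) = (b:ℝ) := by ring
  simp only [Nat.cast_one]
  rw [c1, c2]
  have i1 : Finset.Icc 1 b = Finset.Ioc 0 b := Finset.Icc_add_one_left_eq_Ioc 0 b
  have i2 : Finset.Icc (b+1) T = Finset.Ioc b T := Finset.Icc_add_one_left_eq_Ioc b T
  rw [i1, i2]
  have s1 : ∑ t ∈ Finset.Ioc 0 b, g t = ((b - 0 : ℕ):ℝ) * a :=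
    sum_const_Ioc g a 0 b (fun t ht1 ht2 => ha t ht1 (le_trans ht2 h2))
  have ssplit : ∑ t ∈ Finset.Ioc b η, g t + ∑ t ∈ Finset.Ioc η T, g t
      = ∑ t ∈ Finset.Ioc b T, g t := Finset.sum_Ioc_consecutive _ h2 h3.le
  have s2 : ∑ t ∈ Finset.Ioc b η, g t = ((η - b : ℕ):ℝ) * a :=
    sum_const_Ioc g a b η (fun t ht1 ht2 => ha t (le_trans h1 ht1.le) ht2)
  have s3 : ∑ t ∈ Finset.Ioc η T, g t = ((T - η : ℕ):ℝ) * a' :=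
    sum_const_Ioc g a' η T (fun t ht1 ht2 => ha' t ht1 ht2)
  rw [← ssplit, s1, s2, s3]
  have hb : (0:ℝ) < b := by exact_mod_cast h1
  have hbT' : (b:ℝ) < T := by exact_mod_cast hbT
  have hkey := key_id (T:ℝ) (b:ℝ) hb hbT'
  have cη : ((η - b : ℕ):ℝ) = (η:ℝ) - b := by
    rw [Nat.cast_sub h2]
  have cT : ((T - η : ℕ):ℝ) = (T:ℝ) - η := by
    rw [Nat.cast_sub h3.le]
  have c0 : ((b - 0 : ℕ):ℝ) = (b:ℝ) := by norm_num
  rw [cη, cT, c0]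
  linear_combination a * hkey

lemma cusum_right (T η b : ℕ) (a a' : ℝ) (g : ℕ → ℝ) (h1 : 1 ≤ η) (h2 : η ≤ b) (h3 : b < T)
    (ha : ∀ t, 1 ≤ t → t ≤ η → g t = a) (ha' : ∀ t, η < t → t ≤ T → g t = a') :
    cusum g 1 b T = Real.sqrt (((T:ℝ)-b)/((T:ℝ)*b)) * ((η:ℝ)*(a-a')) := by
  unfold cusum
  have c1 : ((T:ℝ) - 1 + 1) = (T:ℝ) := by ring
  have c2 : ((b:ℝ) - 1 + 1) = (b:ℝ) := by ring
  simp only [Nat.cast_one]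
  rw [c1, c2]
  rw [show Finset.Icc 1 b = Finset.Ioc 0 b from Finset.Icc_add_one_left_eq_Ioc 0 b, Finset.Icc_add_one_left_eq_Ioc b T]
  have ssplit : ∑ t ∈ Finset.Ioc 0 η, g t + ∑ t ∈ Finset.Ioc η b, g t
      = ∑ t ∈ Finset.Ioc 0 b, g t := Finset.sum_Ioc_consecutive _ (Nat.zero_le η) h2
  have s1 : ∑ t ∈ Finset.Ioc 0 η, g t = ((η - 0 : ℕ):ℝ) * a :=
    sum_const_Ioc g a 0 η (fun t ht1 ht2 => ha t ht1 ht2)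
  have s2 : ∑ t ∈ Finset.Ioc η b, g t = ((b - η : ℕ):ℝ) * a' :=
    sum_const_Ioc g a' η b (fun t ht1 ht2 => ha' t ht1 (le_trans ht2 h3.le))
  have s3 : ∑ t ∈ Finset.Ioc b T, g t = ((T - b : ℕ):ℝ) * a' :=
    sum_const_Ioc g a' b T (fun t ht1 ht2 => ha' t (lt_of_le_of_lt h2 ht1) ht2)
  rw [← ssplit, s1, s2, s3]
  have hb : (0:ℝ) < b := by exact_mod_cast lt_of_lt_of_le h1 h2
  have hbT' : (b:ℝ) < T := by exact_mod_cast h3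
  have hkey := key_id (T:ℝ) (b:ℝ) hb hbT'
  rw [Nat.cast_sub h2, Nat.cast_sub h3.le, Nat.sub_zero]
  linear_combination a' * hkey

lemma sqrt_diff (T b η : ℝ) (hb : 0 < b) (hbη : b < η) (hηT : η < T) :
    T*(η-b)/(2*(T-b)*Real.sqrt (T*(η*(T-η)))) ≤
      Real.sqrt (η/(T*(T-η))) - Real.sqrt (b/(T*(T-b))) := by
  have hη : 0 < η := hb.trans hbη
  have hT : 0 < T := hη.trans hηT
  have hTη : 0 < T - η := by linarith
  have hTb : 0 < T - b := by linarith
  set u := Real.sqrt (η/(T*(T-η))) with hu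
  set v := Real.sqrt (b/(T*(T-b))) with hv
  set s := Real.sqrt (T*(η*(T-η))) with hs
  have hu2 : u^2 = η/(T*(T-η)) := Real.sq_sqrt (by positivity)
  have hv2 : v^2 = b/(T*(T-b)) := Real.sq_sqrt (by positivity)
  have hspos : 0 < s := Real.sqrt_pos.mpr (by positivity)
  have hupos : 0 < u := Real.sqrt_pos.mpr (by positivity)
  have hvpos : 0 < v := Real.sqrt_pos.mpr (by positivity)
  have hvu : v ≤ u := by
    apply Real.sqrt_le_sqrt
    rw [div_le_div_iff₀ (by positivity) (by positivity)]
    nlinarith [mul_le_mul_of_nonneg_right hbη.le (mul_pos hT hT).le]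
  -- s = u * (T*(T-η))
  have hsu : u * (T*(T-η)) = s := by
    have e : (η/(T*(T-η))) * (T*(T-η))^2 = T*(η*(T-η)) := by field_simp
    have h := Real.sqrt_mul (by positivity : (0:ℝ) ≤ η/(T*(T-η))) ((T*(T-η))^2)
    rw [Real.sqrt_sq (by positivity : (0:ℝ) ≤ T*(T-η)), e] at h
    rw [hs, hu, ← h]
  have huv : (u-v)*(u+v)*((T-η)*(T-b)) * T = T * (η-b) := by
    have : (u-v)*(u+v) = u^2 - v^2 := by ring
    rw [this, hu2, hv2]
    field_simp
    ring
  rw [div_le_iff₀ (by positivity), ← hsu]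
  nlinarith [mul_nonneg (mul_nonneg (mul_nonneg hT.le hTη.le) hTb.le)
      (mul_nonneg (sub_nonneg.mpr hvu) (sub_nonneg.mpr hvu))]

lemma sqrt_mul_sqrt (T x : ℝ) (hx : 0 < x) (hxT : x < T) :
    Real.sqrt (x/(T*(T-x))) * Real.sqrt (T*(x*(T-x))) = x := by
  have hT : 0 < T := hx.trans hxT
  have hTx : 0 < T - x := by linarith
  rw [← Real.sqrt_mul (by positivity : (0:ℝ) ≤ x/(T*(T-x)))]
  have e : x/(T*(T-x)) * (T*(x*(T-x))) = x^2 := by field_simp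
  rw [e, Real.sqrt_sq hx.le]


set_option maxHeartbeats 1600000 in
/-- Lemma 6 of the paper: for a step function `g` on `[1, T]` with a
single change-point at `η₁ ∈ (1, T)` and positive jump size, there is an absolute
constant `C₃ > 0` such that for any `ε_T, c₀ > 0` with `c₀ ε_T ≤ η₁ ∧ (T - η₁)` and
any `b' ∈ [1, T)` with `|b' - η₁| ≥ c₀ ε_T`,
`|C_{η₁}(g) - C_{b'}(g)| ≥ C₃ c₀ ε_T |C_{η₁}(g)| T / (η₁ (T - η₁))`. -/
theorem cusum_drop_away_from_single_changePoint :
    ∃ C₃ : ℝ, 0 < C₃ ∧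
      ∀ (T η₁ : ℕ) (a a' : ℝ) (g : ℕ → ℝ) (εT c₀ : ℝ) (b' : ℕ),
        1 < η₁ → η₁ < T →
        (∀ t, 1 ≤ t → t ≤ η₁ → g t = a) →
        (∀ t, η₁ < t → t ≤ T → g t = a') →
        a ≠ a' → 0 < εT → 0 < c₀ →
        c₀ * εT ≤ ((min η₁ (T - η₁) : ℕ) : ℝ) →
        1 ≤ b' → b' < T → c₀ * εT ≤ |(b' : ℝ) - (η₁ : ℝ)| →
        C₃ * c₀ * εT * |cusum g 1 η₁ T| * (T : ℝ) / ((η₁ : ℝ) * ((T : ℝ) - η₁)) ≤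
          |cusum g 1 η₁ T - cusum g 1 b' T| := by
  refine ⟨1/4, by norm_num, ?_⟩
  intro T η a a' g εT c₀ b' hη1 hηT ha ha' hne hε hc hmin hb1 hbT hdist
  -- basic real facts
  have hrη : (1:ℝ) < (η:ℝ) := by exact_mod_cast hη1
  have hrηT : (η:ℝ) < (T:ℝ) := by exact_mod_cast hηT
  have hrbT : ((b':ℝ)) < (T:ℝ) := by exact_mod_cast hbT
  have hrb1 : (1:ℝ) ≤ (b':ℝ) := by exact_mod_cast hb1
  have hTpos : (0:ℝ) < T := by linarith
  have hηpos : (0:ℝ) < η := by linarith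
  have hTη : (0:ℝ) < (T:ℝ) - η := by linarith
  have hcε : 0 < c₀ * εT := mul_pos hc hε
  have hmin' : c₀ * εT ≤ min (η:ℝ) ((T:ℝ) - η) := by
    rwa [Nat.cast_min, Nat.cast_sub hηT.le] at hmin
  have hcη : c₀ * εT ≤ (η:ℝ) := hmin'.trans (min_le_left _ _)
  have hcTη : c₀ * εT ≤ (T:ℝ) - η := hmin'.trans (min_le_right _ _)
  have hδ : 0 < |a - a'| := abs_pos.mpr (sub_ne_zero.mpr hne)
  set δa := |a - a'| with hδa
  have hbne : b' ≠ η := by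
    intro h
    rw [h, sub_self, abs_zero] at hdist
    linarith
  rcases lt_or_gt_of_ne hbne with hlt | hgt
  · -- case b' < η
    have hrlt : ((b':ℝ)) < (η:ℝ) := by exact_mod_cast hlt
    have hd : c₀ * εT ≤ (η:ℝ) - b' := by
      rwa [abs_of_nonpos (by linarith), neg_sub] at hdist
    have hrbpos : (0:ℝ) < b' := by linarith
    have hTb : (0:ℝ) < (T:ℝ) - b' := by linarith
    have hCη := cusum_left T η η a a' g (by omega) le_rfl hηT ha ha'
    have hCb := cusum_left T η b' a a' g hb1 hlt.le hηT ha ha'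
    set u0 := Real.sqrt ((η:ℝ)/((T:ℝ)*((T:ℝ)-η))) with hu0
    set v0 := Real.sqrt ((b':ℝ)/((T:ℝ)*((T:ℝ)-b'))) with hv0
    set s := Real.sqrt ((T:ℝ)*((η:ℝ)*((T:ℝ)-η))) with hs0
    have hspos : 0 < s := Real.sqrt_pos.mpr (by positivity)
    have hupos : 0 < u0 := Real.sqrt_pos.mpr (by positivity)
    have hL := sqrt_diff (T:ℝ) (b':ℝ) (η:ℝ) hrbpos hrlt hrηT
    have hL' : (T:ℝ)*((η:ℝ)-b') ≤ (u0 - v0)*(2*((T:ℝ)-b')*s) :=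
      (div_le_iff₀ (by positivity)).mp hL
    have hus : u0 * s = (η:ℝ) := sqrt_mul_sqrt (T:ℝ) (η:ℝ) hηpos hrηT
    have huv0 : 0 ≤ u0 - v0 :=
      le_trans (le_of_lt (div_pos (by nlinarith) (by positivity))) hL
    have habs1 : |cusum g 1 η T| = u0 * (((T:ℝ)-η) * δa) := by
      rw [hCη, abs_mul, abs_mul, abs_of_nonneg (Real.sqrt_nonneg _),
        abs_of_nonneg hTη.le]
    have habs2 : |cusum g 1 η T - cusum g 1 b' T| = (u0 - v0) * (((T:ℝ)-η) * δa) := by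
      rw [hCη, hCb, show u0 * (((T:ℝ)-η)*(a-a')) - v0 * (((T:ℝ)-η)*(a-a'))
          = (u0 - v0) * (((T:ℝ)-η)*(a-a')) from by ring,
        abs_mul, abs_mul, abs_of_nonneg huv0, abs_of_nonneg hTη.le]
    rw [habs1, habs2, div_le_iff₀ (by positivity)]
    have e2 : (c₀*εT)*((T:ℝ)-b') ≤ 2*((T:ℝ)-η)*((η:ℝ)-b') := by
      nlinarith [mul_le_mul_of_nonneg_right hd hTη.le,
        mul_le_mul_of_nonneg_right hcTη (by linarith : (0:ℝ) ≤ (η:ℝ)-b')]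
    have main : 1/4*(c₀*εT)*u0*(T:ℝ) ≤ (u0 - v0)*((η:ℝ)*((T:ℝ)-η)) := by
      have h3 : (1/4*(c₀*εT)*u0*(T:ℝ)) * (2*((T:ℝ)-b'))
          ≤ ((u0 - v0)*((η:ℝ)*((T:ℝ)-η))) * (2*((T:ℝ)-b')) := by
        calc (1/4*(c₀*εT)*u0*(T:ℝ))*(2*((T:ℝ)-b'))
            = (u0*(T:ℝ)/2)*((c₀*εT)*((T:ℝ)-b')) := by ring
          _ ≤ (u0*(T:ℝ)/2)*(2*((T:ℝ)-η)*((η:ℝ)-b')) :=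
              mul_le_mul_of_nonneg_left e2 (by positivity)
          _ = ((T:ℝ)*((η:ℝ)-b'))*(u0*((T:ℝ)-η)) := by ring
          _ ≤ ((u0 - v0)*(2*((T:ℝ)-b')*s))*(u0*((T:ℝ)-η)) :=
              mul_le_mul_of_nonneg_right hL' (by positivity)
          _ = ((u0 - v0)*((u0*s)*((T:ℝ)-η)))*(2*((T:ℝ)-b')) := by ring
          _ = ((u0 - v0)*((η:ℝ)*((T:ℝ)-η)))*(2*((T:ℝ)-b')) := by rw [hus]
      exact le_of_mul_le_mul_right h3 (by positivity)
    nlinarith [mul_le_mul_of_nonneg_right main (by positivity : (0:ℝ) ≤ ((T:ℝ)-η)*δa)]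
  · -- case η < b'
    have hrgt : ((η:ℝ)) < (b':ℝ) := by exact_mod_cast hgt
    have hd : c₀ * εT ≤ (b':ℝ) - η := by
      rwa [abs_of_nonneg (by linarith)] at hdist
    have hrbpos : (0:ℝ) < b' := by linarith
    have hTb : (0:ℝ) < (T:ℝ) - b' := by linarith
    have hCη := cusum_right T η η a a' g (by omega) le_rfl hηT ha ha'
    have hCb := cusum_right T η b' a a' g (by omega) hgt.le hbT ha ha'
    set u0 := Real.sqrt (((T:ℝ)-η)/((T:ℝ)*(η:ℝ))) with hu0
    set v0 := Real.sqrt (((T:ℝ)-b')/((T:ℝ)*(b':ℝ))) with hv0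
    have hL0 := sqrt_diff (T:ℝ) ((T:ℝ)-b') ((T:ℝ)-η) hTb (by linarith) (by linarith)
    rw [show (T:ℝ) - ((T:ℝ)-(b':ℝ)) = (b':ℝ) from by ring,
        show (T:ℝ) - ((T:ℝ)-(η:ℝ)) = (η:ℝ) from by ring] at hL0
    set s := Real.sqrt ((T:ℝ)*(((T:ℝ)-η)*(η:ℝ))) with hs0
    have hspos : 0 < s := Real.sqrt_pos.mpr (by positivity)
    have hupos : 0 < u0 := Real.sqrt_pos.mpr (by positivity)
    have hL' : (T:ℝ)*(((T:ℝ)-η)-((T:ℝ)-b')) ≤ (u0 - v0)*(2*((b':ℝ))*s) :=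
      (div_le_iff₀ (by positivity)).mp hL0
    have hus : u0 * s = (T:ℝ)-(η:ℝ) := by
      have h := sqrt_mul_sqrt (T:ℝ) ((T:ℝ)-η) hTη (by linarith)
      rw [show (T:ℝ) - ((T:ℝ)-(η:ℝ)) = (η:ℝ) from by ring] at h
      exact h
    have huv0 : 0 ≤ u0 - v0 :=
      le_trans (le_of_lt (div_pos (by nlinarith) (by positivity))) hL0
    have habs1 : |cusum g 1 η T| = u0 * ((η:ℝ) * δa) := by
      rw [hCη, abs_mul, abs_mul, abs_of_nonneg (Real.sqrt_nonneg _),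
        abs_of_nonneg hηpos.le]
    have habs2 : |cusum g 1 η T - cusum g 1 b' T| = (u0 - v0) * ((η:ℝ) * δa) := by
      rw [hCη, hCb, show u0 * ((η:ℝ)*(a-a')) - v0 * ((η:ℝ)*(a-a'))
          = (u0 - v0) * ((η:ℝ)*(a-a')) from by ring,
        abs_mul, abs_mul, abs_of_nonneg huv0, abs_of_nonneg hηpos.le]
    rw [habs1, habs2, div_le_iff₀ (by positivity)]
    have e2 : (c₀*εT)*((b':ℝ)) ≤ 2*((η:ℝ))*((b':ℝ)-η) := by
      nlinarith [mul_le_mul_of_nonneg_right hd hηpos.le,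
        mul_le_mul_of_nonneg_right hcη (by linarith : (0:ℝ) ≤ (b':ℝ)-η)]
    have main : 1/4*(c₀*εT)*u0*(T:ℝ) ≤ (u0 - v0)*((η:ℝ)*((T:ℝ)-η)) := by
      have h3 : (1/4*(c₀*εT)*u0*(T:ℝ)) * (2*((b':ℝ)))
          ≤ ((u0 - v0)*((η:ℝ)*((T:ℝ)-η))) * (2*((b':ℝ))) := by
        calc (1/4*(c₀*εT)*u0*(T:ℝ))*(2*((b':ℝ)))
            = (u0*(T:ℝ)/2)*((c₀*εT)*((b':ℝ))) := by ring
          _ ≤ (u0*(T:ℝ)/2)*(2*((η:ℝ))*((b':ℝ)-η)) :=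
              mul_le_mul_of_nonneg_left e2 (by positivity)
          _ = ((T:ℝ)*(((T:ℝ)-η)-((T:ℝ)-b')))*(u0*(η:ℝ)) := by ring
          _ ≤ ((u0 - v0)*(2*((b':ℝ))*s))*(u0*(η:ℝ)) :=
              mul_le_mul_of_nonneg_right hL' (by positivity)
          _ = ((u0 - v0)*((u0*s)*(η:ℝ)))*(2*((b':ℝ))) := by ring
          _ = ((u0 - v0)*((η:ℝ)*((T:ℝ)-η)))*(2*((b':ℝ))) := by rw [hus]; ring
      exact le_of_mul_le_mul_right h3 (by positivity)
    nlinarith [mul_le_mul_of_nonneg_right main (by positivity : (0:ℝ) ≤ (η:ℝ)*δa)]
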